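/- Let Σ be symmetric PSD with eigenvalues λ_1 < λ_2 ≤ ... ≤ λ_d and orthonormal eigenvectors θ_1, ..., θ_d. Suppose {V_n} is a sequence of nonzero vectors with ‖V_n‖ bounded above and below away from zero, such that f(V_n) → 0 and μ(V_n) → λ_1, where μ(V) = ⟨ΣV, V⟩/‖V‖² and f(V) = ‖ΣV‖²/‖V‖² − μ(V)². Then ⟨V_n, θ_i⟩ → 0 for every i ≥ 2, i.e., V_n − ⟨V_n, θ_1⟩θ_1 → 0. -/

import Mathlib

open RealInnerProductSpace Filter

/-- If the Rayleigh quotient converges to the (simple) smallest eigenvalue and the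
    variance functional tends to zero, the iterates align with the bottom eigenvector. -/
theorem alignment_of_rayleigh_convergence {d : ℕ}
    (T : EuclideanSpace ℝ (Fin (d + 2)) →L[ℝ] EuclideanSpace ℝ (Fin (d + 2)))
    (hsym : IsSelfAdjoint T) (hpsd : ∀ v, 0 ≤ ⟪T v, v⟫)
    (θ : OrthonormalBasis (Fin (d + 2)) ℝ (EuclideanSpace ℝ (Fin (d + 2))))
    (lam : Fin (d + 2) → ℝ) (heig : ∀ j, T (θ j) = lam j • θ j)
    (hmono : Monotone lam) (hgap : lam 0 < lam 1)
    (V : ℕ → EuclideanSpace ℝ (Fin (d + 2))) (hV : ∀ n, V n ≠ 0)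
    (m M : ℝ) (hm : 0 < m) (hbound : ∀ n, m ≤ ‖V n‖ ∧ ‖V n‖ ≤ M)
    (hf : Tendsto (fun n =>
        ‖T (V n)‖ ^ 2 / ‖V n‖ ^ 2 - (⟪T (V n), V n⟫ / ‖V n‖ ^ 2) ^ 2) atTop (nhds 0))
    (hμ : Tendsto (fun n => ⟪T (V n), V n⟫ / ‖V n‖ ^ 2) atTop (nhds (lam 0))) :
    (∀ i, i ≠ 0 → Tendsto (fun n => ⟪V n, θ i⟫) atTop (nhds 0)) ∧
      Tendsto (fun n => V n - ⟪V n, θ 0⟫ • θ 0) atTop (nhds 0) := by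
  have hsymm : ∀ (v : EuclideanSpace ℝ (Fin (d + 2))) (i : Fin (d + 2)),
      (⟪T v, θ i⟫ : ℝ) = lam i * ⟪v, θ i⟫ := fun v i => by
    rw [show (inner ℝ (T v) (θ i) : ℝ) = inner ℝ v (T (θ i)) from hsym.isSymmetric v (θ i),
      heig, real_inner_smul_right]
  have hVpos : ∀ n, (0 : ℝ) < ‖V n‖ ^ 2 := fun n => pow_pos (norm_pos_iff.mpr (hV n)) 2
  have hM : ∀ n, ‖V n‖ ^ 2 ≤ M ^ 2 := fun n =>
    pow_le_pow_left₀ (norm_nonneg _) (hbound n).2 2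
  have hnormsq : ∀ w : EuclideanSpace ℝ (Fin (d + 2)),
      ‖w‖ ^ 2 = ∑ i, (⟪w, θ i⟫ : ℝ) ^ 2 := by
    intro w
    rw [← real_inner_self_eq_norm_sq, ← θ.sum_inner_mul_inner w w]
    exact Finset.sum_congr rfl fun i _ => by rw [real_inner_comm (θ i) w]; ring
  have hTnormsq : ∀ n, ‖T (V n)‖ ^ 2 = ∑ i, lam i ^ 2 * (⟪V n, θ i⟫ : ℝ) ^ 2 := by
    intro n
    rw [hnormsq (T (V n))]
    exact Finset.sum_congr rfl fun i _ => by rw [hsymm]; ring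
  set μ : ℕ → ℝ := fun n => ⟪T (V n), V n⟫ / ‖V n‖ ^ 2 with hμdef
  have hμ' : Tendsto μ atTop (nhds (lam 0)) := hμ
  have hμ0 : ∀ n, 0 ≤ μ n := fun n => div_nonneg (hpsd (V n)) (hVpos n).le
  set g : ℕ → ℝ := fun n => ‖T (V n)‖ ^ 2 - μ n ^ 2 * ‖V n‖ ^ 2 with hgdef
  have hgsum : ∀ n, g n = ∑ i, (⟪V n, θ i⟫ : ℝ) ^ 2 * (lam i ^ 2 - μ n ^ 2) := by
    intro n
    show ‖T (V n)‖ ^ 2 - μ n ^ 2 * ‖V n‖ ^ 2 = _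
    rw [hTnormsq n, hnormsq (V n), Finset.mul_sum, ← Finset.sum_sub_distrib]
    exact Finset.sum_congr rfl fun i _ => by ring
  have hg0 : Tendsto g atTop (nhds 0) := by
    have hb : ∀ n, ‖g n‖ ≤
        |‖T (V n)‖ ^ 2 / ‖V n‖ ^ 2 - (⟪T (V n), V n⟫ / ‖V n‖ ^ 2) ^ 2| * M ^ 2 := by
      intro n
      have hne : ‖V n‖ ^ 2 ≠ 0 := (hVpos n).ne'
      have he : g n = (‖T (V n)‖ ^ 2 / ‖V n‖ ^ 2 - (⟪T (V n), V n⟫ / ‖V n‖ ^ 2) ^ 2)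
          * ‖V n‖ ^ 2 := by
        show ‖T (V n)‖ ^ 2 - μ n ^ 2 * ‖V n‖ ^ 2 = _
        rw [sub_mul, div_mul_cancel₀ _ hne]
      rw [Real.norm_eq_abs, he, abs_mul, abs_of_nonneg (hVpos n).le]
      exact mul_le_mul_of_nonneg_left (hM n) (abs_nonneg _)
    refine squeeze_zero_norm hb ?_
    simpa using hf.abs.mul_const (M ^ 2)
  have hθnorm : ∀ i, ‖θ i‖ = 1 := fun i => θ.orthonormal.1 i
  have hlam0 : 0 ≤ lam 0 := by
    have h := hpsd (θ 0)
    rw [heig 0, real_inner_smul_left, real_inner_self_eq_norm_sq, hθnorm] at h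
    simpa using h
  have hlam1 : ∀ j : Fin (d + 2), j ≠ 0 → lam 1 ≤ lam j := by
    intro j hj
    apply hmono
    have hjv : j.val ≠ 0 := fun h0 => hj (Fin.ext (by rw [h0]; rfl))
    rw [Fin.le_def]
    simp only [Fin.val_one]
    omega
  have hl1 : 0 ≤ lam 1 := le_trans hlam0 hgap.le
  set b : ℝ := (lam 0 + lam 1) / 2 with hbdef
  set ε : ℝ := lam 1 ^ 2 - b ^ 2 with hεdef
  have hε : 0 < ε := by rw [hεdef, hbdef]; nlinarith
  have hevb : ∀ᶠ n in atTop, μ n < b := hμ'.eventually_lt_const (by rw [hbdef]; linarith)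
  set h : ℕ → ℝ := fun n => g n + M ^ 2 * |μ n ^ 2 - lam 0 ^ 2| with hhdef
  have hh0 : Tendsto h atTop (nhds 0) := by
    have h1 : Tendsto (fun n => μ n ^ 2 - lam 0 ^ 2) atTop (nhds 0) := by
      have h0 := (hμ'.pow 2).sub_const (lam 0 ^ 2)
      rwa [sub_self] at h0
    have h2 : Tendsto (fun n => M ^ 2 * |μ n ^ 2 - lam 0 ^ 2|) atTop (nhds 0) := by
      simpa using h1.abs.const_mul (M ^ 2)
    simpa using hg0.add h2
  have hkey : ∀ i : Fin (d + 2), i ≠ 0 →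
      ∀ᶠ n in atTop, (⟪V n, θ i⟫ : ℝ) ^ 2 ≤ h n / ε := by
    intro i hi
    filter_upwards [hevb] with n hn
    have hterm : ∀ j : Fin (d + 2), j ≠ 0 → ε ≤ lam j ^ 2 - μ n ^ 2 := by
      intro j hj
      have h1 := hlam1 j hj
      have h2 := hμ0 n
      rw [hεdef]
      nlinarith
    have hc0 : (⟪V n, θ 0⟫ : ℝ) ^ 2 ≤ M ^ 2 := by
      have hs := Finset.single_le_sum (f := fun j => (⟪V n, θ j⟫ : ℝ) ^ 2)
        (fun j _ => sq_nonneg _) (Finset.mem_univ 0)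
      calc (⟪V n, θ 0⟫ : ℝ) ^ 2 ≤ ∑ j, (⟪V n, θ j⟫ : ℝ) ^ 2 := hs
        _ = ‖V n‖ ^ 2 := (hnormsq (V n)).symm
        _ ≤ M ^ 2 := hM n
    rw [le_div_iff₀ hε]
    have e1 : ∑ j ∈ Finset.univ.erase 0, (⟪V n, θ j⟫ : ℝ) ^ 2 * (lam j ^ 2 - μ n ^ 2)
        = g n - (⟪V n, θ 0⟫ : ℝ) ^ 2 * (lam 0 ^ 2 - μ n ^ 2) := by
      rw [hgsum n, eq_sub_iff_add_eq]
      exact Finset.sum_erase_add _ _ (Finset.mem_univ 0)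
    have e2 : (⟪V n, θ i⟫ : ℝ) ^ 2 * ε
        ≤ ∑ j ∈ Finset.univ.erase 0, (⟪V n, θ j⟫ : ℝ) ^ 2 * (lam j ^ 2 - μ n ^ 2) := by
      have hs := Finset.single_le_sum
        (f := fun j => (⟪V n, θ j⟫ : ℝ) ^ 2 * (lam j ^ 2 - μ n ^ 2))
        (fun j hjmem => mul_nonneg (sq_nonneg _)
          (le_trans hε.le (hterm j (Finset.ne_of_mem_erase hjmem))))
        (Finset.mem_erase.2 ⟨hi, Finset.mem_univ i⟩)
      calc (⟪V n, θ i⟫ : ℝ) ^ 2 * ε ≤ (⟪V n, θ i⟫ : ℝ) ^ 2 * (lam i ^ 2 - μ n ^ 2) :=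
          mul_le_mul_of_nonneg_left (hterm i hi) (sq_nonneg _)
        _ ≤ _ := hs
    have e3 : g n - (⟪V n, θ 0⟫ : ℝ) ^ 2 * (lam 0 ^ 2 - μ n ^ 2) ≤ h n := by
      show _ ≤ g n + M ^ 2 * |μ n ^ 2 - lam 0 ^ 2|
      have h2 := le_abs_self (μ n ^ 2 - lam 0 ^ 2)
      have h3 := abs_nonneg (μ n ^ 2 - lam 0 ^ 2)
      have h4 := mul_le_mul_of_nonneg_left h2 (sq_nonneg (⟪V n, θ 0⟫ : ℝ))
      have h5 := mul_le_mul_of_nonneg_right hc0 h3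
      nlinarith
    linarith
  have part1 : ∀ i : Fin (d + 2), i ≠ 0 →
      Tendsto (fun n => (⟪V n, θ i⟫ : ℝ)) atTop (nhds 0) := by
    intro i hi
    have hsq : Tendsto (fun n => (⟪V n, θ i⟫ : ℝ) ^ 2) atTop (nhds 0) := by
      refine squeeze_zero' (Eventually.of_forall fun n => sq_nonneg _) (hkey i hi) ?_
      simpa using hh0.div_const ε
    have habs : Tendsto (fun n => |(⟪V n, θ i⟫ : ℝ)|) atTop (nhds 0) := by
      have hc := (Real.continuous_sqrt.tendsto 0).comp hsq
      simp only [Function.comp_def, Real.sqrt_sq_eq_abs, Real.sqrt_zero] at hc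
      exact hc
    exact squeeze_zero_norm (fun n => le_of_eq (Real.norm_eq_abs _)) habs
  refine ⟨part1, ?_⟩
  have hWθ : ∀ n (i : Fin (d + 2)),
      (⟪V n - (⟪V n, θ 0⟫ : ℝ) • θ 0, θ i⟫ : ℝ)
        = if i = 0 then 0 else ⟪V n, θ i⟫ := by
    intro n i
    rw [inner_sub_left, real_inner_smul_left]
    rcases eq_or_ne i 0 with rfl | hi
    · have h1 : (⟪θ 0, θ 0⟫ : ℝ) = 1 := by
        rw [real_inner_self_eq_norm_sq, hθnorm]; norm_num
      simp [h1]
    · have hz : (⟪θ 0, θ i⟫ : ℝ) = 0 := θ.orthonormal.2 (Ne.symm hi)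
      simp [hz, hi]
  have hWn : Tendsto (fun n => ‖V n - (⟪V n, θ 0⟫ : ℝ) • θ 0‖ ^ 2) atTop (nhds 0) := by
    have heq : ∀ n, ‖V n - (⟪V n, θ 0⟫ : ℝ) • θ 0‖ ^ 2
        = ∑ i, (if i = (0 : Fin (d + 2)) then (0 : ℝ) else (⟪V n, θ i⟫ : ℝ)) ^ 2 := by
      intro n
      rw [hnormsq]
      exact Finset.sum_congr rfl fun i _ => by rw [hWθ]
    simp only [heq]
    have hsum : Tendsto
        (fun n => ∑ i : Fin (d + 2),
          (if i = (0 : Fin (d + 2)) then (0 : ℝ) else (⟪V n, θ i⟫ : ℝ)) ^ 2)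
        atTop (nhds (∑ _i : Fin (d + 2), (0 : ℝ))) := by
      apply tendsto_finset_sum
      intro i _
      rcases eq_or_ne i 0 with rfl | hi
      · simpa using (tendsto_const_nhds : Tendsto (fun _ : ℕ => (0 : ℝ)) atTop (nhds 0))
      · simpa [hi] using (part1 i hi).pow 2
    simpa using hsum
  rw [tendsto_zero_iff_norm_tendsto_zero]
  have hc := (Real.continuous_sqrt.tendsto 0).comp hWn
  have hfun : (fun n => Real.sqrt (‖V n - (⟪V n, θ 0⟫ : ℝ) • θ 0‖ ^ 2))
      = fun n => ‖V n - (⟪V n, θ 0⟫ : ℝ) • θ 0‖ :=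
    funext fun n => Real.sqrt_sq (norm_nonneg _)
  simp only [Function.comp_def, Real.sqrt_zero] at hc
  rw [hfun] at hc
  exact hc
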